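/- For each ε ∈ (0,1), the complex Hessian of u^ε(z₁,z₂) = -2(Re z₂)²/log(|z₁|² + ε) - (|z₁|² + ε)(log(|z₁|² + ε) - 2) is positive semidefinite at every point of 𝔻_{1-ε} × ℂ; in particular u^ε is plurisubharmonic there. -/

import Mathlib

open scoped ComplexOrder

/-- Wirtinger derivative `∂/∂z₁`. -/
noncomputable def wd1 (f : ℂ × ℂ → ℂ) (z : ℂ × ℂ) : ℂ :=
  (fderiv ℝ f z (1, 0) - Complex.I * fderiv ℝ f z (Complex.I, 0)) / 2

/-- Wirtinger derivative `∂/∂z̄₁`. -/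
noncomputable def wd1b (f : ℂ × ℂ → ℂ) (z : ℂ × ℂ) : ℂ :=
  (fderiv ℝ f z (1, 0) + Complex.I * fderiv ℝ f z (Complex.I, 0)) / 2

/-- Wirtinger derivative `∂/∂z₂`. -/
noncomputable def wd2 (f : ℂ × ℂ → ℂ) (z : ℂ × ℂ) : ℂ :=
  (fderiv ℝ f z (0, 1) - Complex.I * fderiv ℝ f z (0, Complex.I)) / 2

/-- Wirtinger derivative `∂/∂z̄₂`. -/
noncomputable def wd2b (f : ℂ × ℂ → ℂ) (z : ℂ × ℂ) : ℂ :=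
  (fderiv ℝ f z (0, 1) + Complex.I * fderiv ℝ f z (0, Complex.I)) / 2

/-- The complex Hessian `(u_{i j̄})` of `f` at `z`. -/
noncomputable def cHess (f : ℂ × ℂ → ℂ) (z : ℂ × ℂ) : Matrix (Fin 2) (Fin 2) ℂ :=
  !![wd1 (wd1b f) z, wd1 (wd2b f) z; wd2 (wd1b f) z, wd2 (wd2b f) z]

/-- `u^ε(z₁,z₂) = -2(Re z₂)²/log(|z₁|²+ε) - (|z₁|²+ε)(log(|z₁|²+ε)-2)` (as a ℂ-valued
function with real values). -/
noncomputable def uE (ε : ℝ) (z : ℂ × ℂ) : ℂ :=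
  ((-2 * (z.2.re) ^ 2 / Real.log (‖z.1‖ ^ 2 + ε)
    - (‖z.1‖ ^ 2 + ε) * (Real.log (‖z.1‖ ^ 2 + ε) - 2) : ℝ) : ℂ)

open Complex ContinuousLinearMap


noncomputable def dR (α β : ℝ) (a : ℂ) : ℂ × ℂ →L[ℝ] ℂ :=
  Complex.ofRealCLM.comp
    ((α * (2*a.re)) • (Complex.reCLM.comp (ContinuousLinearMap.fst ℝ ℂ ℂ)) +
     (α * (2*a.im)) • (Complex.imCLM.comp (ContinuousLinearMap.fst ℝ ℂ ℂ)) +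
     β • (Complex.reCLM.comp (ContinuousLinearMap.snd ℝ ℂ ℂ)))

lemma dR_apply (α β : ℝ) (a : ℂ) (w : ℂ × ℂ) :
    dR α β a w = ((α * (2*a.re*w.1.re + 2*a.im*w.1.im) + β * w.2.re : ℝ) : ℂ) := by
  simp [dR]; ring

section
variable (ε : ℝ) (p : ℂ × ℂ)

lemma hre1 : HasFDerivAt (fun q : ℂ × ℂ => q.1.re)
    (Complex.reCLM.comp (ContinuousLinearMap.fst ℝ ℂ ℂ)) p :=
  Complex.reCLM.hasFDerivAt.comp p (ContinuousLinearMap.fst ℝ ℂ ℂ).hasFDerivAt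

lemma him1 : HasFDerivAt (fun q : ℂ × ℂ => q.1.im)
    (Complex.imCLM.comp (ContinuousLinearMap.fst ℝ ℂ ℂ)) p :=
  Complex.imCLM.hasFDerivAt.comp p (ContinuousLinearMap.fst ℝ ℂ ℂ).hasFDerivAt

lemma hre2 : HasFDerivAt (fun q : ℂ × ℂ => q.2.re)
    (Complex.reCLM.comp (ContinuousLinearMap.snd ℝ ℂ ℂ)) p :=
  Complex.reCLM.hasFDerivAt.comp p (ContinuousLinearMap.snd ℝ ℂ ℂ).hasFDerivAt

lemma hT : HasFDerivAt (fun q : ℂ × ℂ => Complex.normSq q.1 + ε)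
    ((2*p.1.re) • (Complex.reCLM.comp (ContinuousLinearMap.fst ℝ ℂ ℂ)) +
     (2*p.1.im) • (Complex.imCLM.comp (ContinuousLinearMap.fst ℝ ℂ ℂ))) p := by
  have h1 := (((hre1 p).mul (hre1 p)).add ((him1 p).mul (him1 p))).add_const ε
  have he : (fun q : ℂ × ℂ => Complex.normSq q.1 + ε)
      = fun q : ℂ × ℂ => q.1.re*q.1.re + q.1.im*q.1.im + ε := by
    funext q; simp [Complex.normSq_apply]
  rw [he]
  refine h1.congr_fderiv ?_
  refine ContinuousLinearMap.ext fun w => ?_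
  simp; ring

lemma hL (ht0 : Complex.normSq p.1 + ε ≠ 0) :
    HasFDerivAt (fun q : ℂ × ℂ => Real.log (Complex.normSq q.1 + ε))
    ((Complex.normSq p.1 + ε)⁻¹ •
      ((2*p.1.re) • (Complex.reCLM.comp (ContinuousLinearMap.fst ℝ ℂ ℂ)) +
       (2*p.1.im) • (Complex.imCLM.comp (ContinuousLinearMap.fst ℝ ℂ ℂ)))) p :=
  (Real.hasDerivAt_log ht0).comp_hasFDerivAt (f := fun q : ℂ × ℂ => Complex.normSq q.1 + ε) p (hT ε p)

end

lemma hasF_uE (ε : ℝ) (p : ℂ × ℂ) (ht0 : 0 < Complex.normSq p.1 + ε)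
    (htL : Real.log (Complex.normSq p.1 + ε) ≠ 0) :
    HasFDerivAt (uE ε)
      (dR (2 * p.2.re ^ 2 / ((Complex.normSq p.1 + ε) * Real.log (Complex.normSq p.1 + ε) ^ 2)
            - Real.log (Complex.normSq p.1 + ε) + 1)
          (-4 * p.2.re / Real.log (Complex.normSq p.1 + ε)) p.1) p := by
  have hne : Complex.normSq p.1 + ε ≠ 0 := ht0.ne'
  have hLinv := (hasDerivAt_inv htL).comp_hasFDerivAt p (hL ε p hne)
  have hG := ((((hre2 p).mul (hre2 p)).const_mul (-2)).mul hLinv).sub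
      ((hT ε p).mul ((hL ε p hne).sub_const 2))
  have hF := Complex.ofRealCLM.hasFDerivAt.comp p hG
  have huE : uE ε = fun q : ℂ × ℂ =>
      ((-2 * (q.2.re * q.2.re) * (Real.log (Complex.normSq q.1 + ε))⁻¹
        - (Complex.normSq q.1 + ε) * (Real.log (Complex.normSq q.1 + ε) - 2) : ℝ) : ℂ) := by
    funext q
    simp only [uE, Complex.sq_norm]
    exact congrArg _ (by ring)
  rw [huE]
  refine hF.congr_fderiv ?_
  refine ContinuousLinearMap.ext fun w => ?_
  rw [dR_apply]
  simp only [ContinuousLinearMap.coe_comp', Function.comp_apply, Complex.ofRealCLM_apply,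
    Complex.ofReal_inj]
  simp
  field_simp
  ring

noncomputable def v1 (ε : ℝ) (q : ℂ × ℂ) : ℂ := q.1 *
  ((2 * q.2.re ^ 2 / ((Complex.normSq q.1 + ε) * Real.log (Complex.normSq q.1 + ε) ^ 2)
     - Real.log (Complex.normSq q.1 + ε) + 1 : ℝ) : ℂ)

noncomputable def v2 (ε : ℝ) (q : ℂ × ℂ) : ℂ :=
  ((-2 * q.2.re / Real.log (Complex.normSq q.1 + ε) : ℝ) : ℂ)

lemma wd1b_uE (ε : ℝ) (p : ℂ × ℂ) (ht0 : 0 < Complex.normSq p.1 + ε)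
    (htL : Real.log (Complex.normSq p.1 + ε) ≠ 0) :
    wd1b (uE ε) p = v1 ε p := by
  rw [wd1b, (hasF_uE ε p ht0 htL).fderiv, dR_apply, dR_apply, v1]
  simp
  rw [Complex.ext_iff]
  constructor <;> simp [Complex.mul_re, Complex.mul_im] <;> ring

lemma wd2b_uE (ε : ℝ) (p : ℂ × ℂ) (ht0 : 0 < Complex.normSq p.1 + ε)
    (htL : Real.log (Complex.normSq p.1 + ε) ≠ 0) :
    wd2b (uE ε) p = v2 ε p := by
  rw [wd2b, (hasF_uE ε p ht0 htL).fderiv, dR_apply, dR_apply, v2]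
  simp
  rw [Complex.ext_iff]
  constructor <;> simp [Complex.mul_re, Complex.mul_im] <;> ring

lemma hasF_H (ε : ℝ) (p : ℂ × ℂ) (ht0 : 0 < Complex.normSq p.1 + ε)
    (htL : Real.log (Complex.normSq p.1 + ε) ≠ 0) :
    HasFDerivAt
      (fun q : ℂ × ℂ =>
        ((2 * q.2.re ^ 2 / ((Complex.normSq q.1 + ε) * Real.log (Complex.normSq q.1 + ε) ^ 2)
          - Real.log (Complex.normSq q.1 + ε) + 1 : ℝ) : ℂ))
      (dR (-2 * p.2.re ^ 2 * (Real.log (Complex.normSq p.1 + ε) + 2)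
            / ((Complex.normSq p.1 + ε) ^ 2 * Real.log (Complex.normSq p.1 + ε) ^ 3)
            - 1 / (Complex.normSq p.1 + ε))
          (4 * p.2.re / ((Complex.normSq p.1 + ε) * Real.log (Complex.normSq p.1 + ε) ^ 2))
          p.1) p := by
  have hne : Complex.normSq p.1 + ε ≠ 0 := ht0.ne'
  have hTL2ne : (Complex.normSq p.1 + ε) *
      (Real.log (Complex.normSq p.1 + ε) * Real.log (Complex.normSq p.1 + ε)) ≠ 0 :=
    mul_ne_zero hne (mul_ne_zero htL htL)
  have hTL2 := (hT ε p).mul ((hL ε p hne).mul (hL ε p hne))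
  have hinv := (hasDerivAt_inv hTL2ne).comp_hasFDerivAt p hTL2
  have hG := ((((hre2 p).mul (hre2 p)).const_mul 2).mul hinv).sub (hL ε p hne) |>.add_const 1
  have hF := Complex.ofRealCLM.hasFDerivAt.comp p hG
  have he : (fun q : ℂ × ℂ =>
        ((2 * q.2.re ^ 2 / ((Complex.normSq q.1 + ε) * Real.log (Complex.normSq q.1 + ε) ^ 2)
          - Real.log (Complex.normSq q.1 + ε) + 1 : ℝ) : ℂ))
      = fun q : ℂ × ℂ =>
        ((2 * (q.2.re * q.2.re) * ((Complex.normSq q.1 + ε) *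
            (Real.log (Complex.normSq q.1 + ε) * Real.log (Complex.normSq q.1 + ε)))⁻¹
          - Real.log (Complex.normSq q.1 + ε) + 1 : ℝ) : ℂ) := by
    funext q; exact congrArg _ (by ring)
  rw [he]
  refine hF.congr_fderiv ?_
  refine ContinuousLinearMap.ext fun w => ?_
  rw [dR_apply]
  simp only [ContinuousLinearMap.coe_comp', Function.comp_apply, Complex.ofRealCLM_apply,
    Complex.ofReal_inj]
  simp
  field_simp
  ring

lemma hasF_v2 (ε : ℝ) (p : ℂ × ℂ) (ht0 : 0 < Complex.normSq p.1 + ε)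
    (htL : Real.log (Complex.normSq p.1 + ε) ≠ 0) :
    HasFDerivAt (v2 ε)
      (dR (2 * p.2.re / ((Complex.normSq p.1 + ε) * Real.log (Complex.normSq p.1 + ε) ^ 2))
          (-2 / Real.log (Complex.normSq p.1 + ε)) p.1) p := by
  have hne : Complex.normSq p.1 + ε ≠ 0 := ht0.ne'
  have hLinv := (hasDerivAt_inv htL).comp_hasFDerivAt p (hL ε p hne)
  have hG := ((hre2 p).const_mul (-2)).mul hLinv
  have hF := Complex.ofRealCLM.hasFDerivAt.comp p hG
  have he : v2 ε = fun q : ℂ × ℂ =>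
      ((-2 * q.2.re * (Real.log (Complex.normSq q.1 + ε))⁻¹ : ℝ) : ℂ) := by
    funext q; exact congrArg _ (by ring)
  rw [he]
  refine hF.congr_fderiv ?_
  refine ContinuousLinearMap.ext fun w => ?_
  rw [dR_apply]
  simp only [ContinuousLinearMap.coe_comp', Function.comp_apply, Complex.ofRealCLM_apply,
    Complex.ofReal_inj]
  simp
  field_simp

lemma hasF_v1 (ε : ℝ) (p : ℂ × ℂ) (ht0 : 0 < Complex.normSq p.1 + ε)
    (htL : Real.log (Complex.normSq p.1 + ε) ≠ 0) :
    HasFDerivAt (v1 ε)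
      (p.1 • (dR (-2 * p.2.re ^ 2 * (Real.log (Complex.normSq p.1 + ε) + 2)
            / ((Complex.normSq p.1 + ε) ^ 2 * Real.log (Complex.normSq p.1 + ε) ^ 3)
            - 1 / (Complex.normSq p.1 + ε))
          (4 * p.2.re / ((Complex.normSq p.1 + ε) * Real.log (Complex.normSq p.1 + ε) ^ 2))
          p.1)
        + ((2 * p.2.re ^ 2 / ((Complex.normSq p.1 + ε) * Real.log (Complex.normSq p.1 + ε) ^ 2)
          - Real.log (Complex.normSq p.1 + ε) + 1 : ℝ) : ℂ) • (ContinuousLinearMap.fst ℝ ℂ ℂ)) p := by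
  exact (ContinuousLinearMap.fst ℝ ℂ ℂ).hasFDerivAt.mul (hasF_H ε p ht0 htL)

section entries
variable (ε : ℝ) (p : ℂ × ℂ) (hε : 0 < ε) (hp1 : Complex.normSq p.1 + ε < 1)

lemma ht0' (hε : 0 < ε) : 0 < Complex.normSq p.1 + ε :=
  add_pos_of_nonneg_of_pos (Complex.normSq_nonneg _) hε

lemma htL' (hε : 0 < ε) (hp1 : Complex.normSq p.1 + ε < 1) :
    Real.log (Complex.normSq p.1 + ε) < 0 :=
  Real.log_neg (ht0' ε p hε) hp1

lemma hU_open : IsOpen {q : ℂ × ℂ | Complex.normSq q.1 + ε < 1} := by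
  have : Continuous fun q : ℂ × ℂ => Complex.normSq q.1 + ε :=
    (Complex.continuous_normSq.comp continuous_fst).add continuous_const
  exact isOpen_lt this continuous_const

lemma hEv1 (hε : 0 < ε) (hp1 : Complex.normSq p.1 + ε < 1) :
    wd1b (uE ε) =ᶠ[nhds p] v1 ε :=
  Filter.eventuallyEq_of_mem ((hU_open ε).mem_nhds hp1) fun q hq =>
    wd1b_uE ε q (ht0' ε q hε) (htL' ε q hε hq).ne

lemma hEv2 (hε : 0 < ε) (hp1 : Complex.normSq p.1 + ε < 1) :
    wd2b (uE ε) =ᶠ[nhds p] v2 ε :=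
  Filter.eventuallyEq_of_mem ((hU_open ε).mem_nhds hp1) fun q hq =>
    wd2b_uE ε q (ht0' ε q hε) (htL' ε q hε hq).ne

lemma E11 (hε : 0 < ε) (hp1 : Complex.normSq p.1 + ε < 1) :
    wd1 (wd1b (uE ε)) p =
      ((Complex.normSq p.1 *
          (-2 * p.2.re ^ 2 * (Real.log (Complex.normSq p.1 + ε) + 2)
            / ((Complex.normSq p.1 + ε) ^ 2 * Real.log (Complex.normSq p.1 + ε) ^ 3)
            - 1 / (Complex.normSq p.1 + ε))
        + (2 * p.2.re ^ 2 / ((Complex.normSq p.1 + ε) * Real.log (Complex.normSq p.1 + ε) ^ 2)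
          - Real.log (Complex.normSq p.1 + ε) + 1) : ℝ) : ℂ) := by
  rw [wd1, (hEv1 ε p hε hp1).fderiv_eq, (hasF_v1 ε p (ht0' ε p hε) (htL' ε p hε hp1).ne).fderiv]
  simp [dR_apply, Complex.normSq_apply]
  rw [Complex.ext_iff]
  constructor <;> simp [Complex.mul_re, Complex.mul_im] <;> ring

lemma E21 (hε : 0 < ε) (hp1 : Complex.normSq p.1 + ε < 1) :
    wd2 (wd1b (uE ε)) p =
      ((2 * p.2.re / ((Complex.normSq p.1 + ε) * Real.log (Complex.normSq p.1 + ε) ^ 2) : ℝ) : ℂ)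
        * p.1 := by
  rw [wd2, (hEv1 ε p hε hp1).fderiv_eq, (hasF_v1 ε p (ht0' ε p hε) (htL' ε p hε hp1).ne).fderiv]
  simp only [ContinuousLinearMap.add_apply, ContinuousLinearMap.smul_apply,
    ContinuousLinearMap.coe_fst', dR_apply, smul_eq_mul, Complex.one_re, Complex.zero_re,
    Complex.I_re, Complex.one_im, Complex.zero_im, Complex.I_im, mul_zero, zero_mul, add_zero,
    zero_add, mul_one, Complex.ofReal_zero]
  rw [show (4 * p.2.re / ((Complex.normSq p.1 + ε) * Real.log (Complex.normSq p.1 + ε) ^ 2) : ℝ)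
      = 2 * (2 * p.2.re / ((Complex.normSq p.1 + ε) * Real.log (Complex.normSq p.1 + ε) ^ 2))
      from by ring, Complex.ofReal_mul]
  push_cast
  ring

lemma E12 (hε : 0 < ε) (hp1 : Complex.normSq p.1 + ε < 1) :
    wd1 (wd2b (uE ε)) p =
      ((2 * p.2.re / ((Complex.normSq p.1 + ε) * Real.log (Complex.normSq p.1 + ε) ^ 2) : ℝ) : ℂ)
        * (starRingEnd ℂ) p.1 := by
  rw [wd1, (hEv2 ε p hε hp1).fderiv_eq, (hasF_v2 ε p (ht0' ε p hε) (htL' ε p hε hp1).ne).fderiv]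
  simp [dR_apply]
  rw [Complex.ext_iff]
  constructor <;> simp [Complex.mul_re, Complex.mul_im] <;> ring

lemma E22 (hε : 0 < ε) (hp1 : Complex.normSq p.1 + ε < 1) :
    wd2 (wd2b (uE ε)) p = ((-1 / Real.log (Complex.normSq p.1 + ε) : ℝ) : ℂ) := by
  rw [wd2, (hEv2 ε p hε hp1).fderiv_eq, (hasF_v2 ε p (ht0' ε p hε) (htL' ε p hε hp1).ne).fderiv]
  simp [dR_apply]
  rw [Complex.ext_iff]
  constructor <;> simp [Complex.mul_re, Complex.mul_im] <;> ring

end entries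

lemma psd2 (A D : ℝ) (B : ℂ) (hA : 0 ≤ A) (hD : 0 ≤ D)
    (hdet : Complex.normSq B ≤ A * D) :
    (!![(A:ℂ), B; (starRingEnd ℂ) B, (D:ℂ)] : Matrix (Fin 2) (Fin 2) ℂ).PosSemidef := by
  rw [Matrix.posSemidef_iff_dotProduct_mulVec]
  constructor
  · rw [Matrix.IsHermitian]
    ext i j
    fin_cases i <;> fin_cases j <;>
      simp [Matrix.conjTranspose_apply, Complex.conj_ofReal]
  · intro x
    have hexp : dotProduct (star x) ((!![(A:ℂ), B; (starRingEnd ℂ) B, (D:ℂ)]).mulVec x)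
        = ((A * Complex.normSq (x 0) + D * Complex.normSq (x 1)
            + 2 * (B * (starRingEnd ℂ) (x 0) * x 1).re : ℝ) : ℂ) := by
      simp [dotProduct, Matrix.mulVec, Fin.sum_univ_two, Matrix.cons_val_zero,
        Matrix.cons_val_one, Matrix.head_cons]
      rw [Complex.ext_iff]
      constructor <;>
        simp [Complex.normSq_apply, Complex.add_re, Complex.mul_re, Complex.mul_im] <;> ring
    rw [hexp]
    rw [Complex.zero_le_real]
    set n0 := Complex.normSq (x 0) with hn0
    set n1 := Complex.normSq (x 1) with hn1
    have hn0' : 0 ≤ n0 := Complex.normSq_nonneg _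
    have hn1' : 0 ≤ n1 := Complex.normSq_nonneg _
    have hr : (B * (starRingEnd ℂ) (x 0) * x 1).re ^ 2 ≤ Complex.normSq B * n0 * n1 := by
      have h1 : (B * (starRingEnd ℂ) (x 0) * x 1).re ^ 2
          ≤ Complex.normSq (B * (starRingEnd ℂ) (x 0) * x 1) := by
        rw [Complex.normSq_apply]
        nlinarith [sq_nonneg (B * (starRingEnd ℂ) (x 0) * x 1).im]
      simpa [Complex.normSq_mul, mul_assoc] using h1
    set r := (B * (starRingEnd ℂ) (x 0) * x 1).re with hrdef
    have key : 4 * r ^ 2 ≤ (A * n0 + D * n1) ^ 2 := by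
      nlinarith [sq_nonneg (A * n0 - D * n1), hr, hdet,
        mul_nonneg (sub_nonneg.2 hdet) (mul_nonneg hn0' hn1')]
    have hS : 0 ≤ A * n0 + D * n1 := add_nonneg (mul_nonneg hA hn0') (mul_nonneg hD hn1')
    nlinarith [key, hS]

/-- For each `ε ∈ (0,1)`, the complex Hessian of `u^ε` is positive semidefinite at every
point of `𝔻_{1-ε} × ℂ`; in particular `u^ε` is plurisubharmonic there. -/
theorem cHess_uE_posSemidef (ε : ℝ) (hε : ε ∈ Set.Ioo (0 : ℝ) 1) (z : ℂ × ℂ)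
    (hz : ‖z.1‖ < 1 - ε) :
    (cHess (uE ε) z).PosSemidef := by
  rw [cHess]
  obtain ⟨hε0, hε1⟩ := hε
  have habs : 0 ≤ ‖z.1‖ := norm_nonneg z.1
  have hp1 : Complex.normSq z.1 + ε < 1 := by
    rw [← Complex.sq_norm]; nlinarith
  set s := Complex.normSq z.1 with hs
  have hs0 : 0 ≤ s := Complex.normSq_nonneg z.1
  set t := s + ε with ht
  have ht0 : 0 < t := add_pos_of_nonneg_of_pos hs0 hε0
  set L := Real.log t with hLdef
  have hL : L < 0 := Real.log_neg ht0 hp1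
  have hL' : 0 < -L := neg_pos.2 hL
  have hLne : L ≠ 0 := hL.ne
  have htne : t ≠ 0 := ht0.ne'
  set x := z.2.re with hx
  set A : ℝ := s * (-2 * x ^ 2 * (L + 2) / (t ^ 2 * L ^ 3) - 1 / t)
      + (2 * x ^ 2 / (t * L ^ 2) - L + 1) with hAdef
  set c : ℝ := 2 * x / (t * L ^ 2) with hcdef
  set D : ℝ := -1 / L with hDdef
  have hD : 0 ≤ D := le_of_lt (div_pos_iff.2 (Or.inr ⟨by norm_num, hL⟩))
  have hA : 0 ≤ A := by
    have hP : 0 < t ^ 2 * (-L) ^ 3 := by positivity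
    have key : 0 ≤ A * (t ^ 2 * (-L) ^ 3) := by
      have expand : A * (t ^ 2 * (-L) ^ 3)
          = 2 * x ^ 2 * (ε * (-L) + 2 * s) + t ^ 2 * L ^ 4 + ε * t * (-L) ^ 3 := by
        rw [hAdef, ht]; field_simp; ring
      rw [expand]
      have h1 : 0 ≤ 2 * x ^ 2 * (ε * (-L) + 2 * s) := by positivity
      have h2 : 0 ≤ t ^ 2 * L ^ 4 := by positivity
      have h3 : 0 ≤ ε * t * (-L) ^ 3 := by positivity
      linarith
    nlinarith [key, hP]
  have hdet : Complex.normSq ((c : ℂ) * (starRingEnd ℂ) z.1) ≤ A * D := by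
    have hnB : Complex.normSq ((c : ℂ) * (starRingEnd ℂ) z.1) = c ^ 2 * s := by
      rw [Complex.normSq_mul, Complex.normSq_conj, Complex.normSq_ofReal, hs]; ring
    rw [hnB]
    have hQ : 0 < t ^ 2 * L ^ 4 * (-L) := by positivity
    have key : 0 ≤ (A * D - c ^ 2 * s) * (t ^ 2 * L ^ 4 * (-L)) := by
      have expand : (A * D - c ^ 2 * s) * (t ^ 2 * L ^ 4 * (-L))
          = 2 * x ^ 2 * ε * L ^ 2 + t ^ 2 * L ^ 4 * (-L) + ε * t * L ^ 4 := by
        rw [hAdef, hcdef, hDdef, ht]; field_simp; ring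
      rw [expand]
      have h1 : 0 ≤ 2 * x ^ 2 * ε * L ^ 2 := by positivity
      have h2 : 0 ≤ t ^ 2 * L ^ 4 * (-L) := by positivity
      have h3 : 0 ≤ ε * t * L ^ 4 := by positivity
      linarith
    nlinarith [key, hQ]
  have e11 := E11 ε z hε0 hp1
  have e12 := E12 ε z hε0 hp1
  have e21 := E21 ε z hε0 hp1
  have e22 := E22 ε z hε0 hp1
  rw [e11, e12, e21, e22]
  have hB : ((2 * z.2.re / ((Complex.normSq z.1 + ε) * Real.log (Complex.normSq z.1 + ε) ^ 2)
      : ℝ) : ℂ) = (c : ℂ) := by rw [hcdef, hLdef, ht, hx, hs]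
  have hBconj : ((c : ℝ) : ℂ) * z.1 = (starRingEnd ℂ) ((c : ℂ) * (starRingEnd ℂ) z.1) := by
    rw [map_mul, Complex.conj_conj, Complex.conj_ofReal]
  have hAeq : ((Complex.normSq z.1 *
        (-2 * z.2.re ^ 2 * (Real.log (Complex.normSq z.1 + ε) + 2)
          / ((Complex.normSq z.1 + ε) ^ 2 * Real.log (Complex.normSq z.1 + ε) ^ 3)
          - 1 / (Complex.normSq z.1 + ε))
      + (2 * z.2.re ^ 2 / ((Complex.normSq z.1 + ε) * Real.log (Complex.normSq z.1 + ε) ^ 2)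
        - Real.log (Complex.normSq z.1 + ε) + 1) : ℝ) : ℂ) = ((A : ℝ) : ℂ) := by
    rw [hAdef, hLdef, hx, ht, hs]
  have hDeq : ((-1 / Real.log (Complex.normSq z.1 + ε) : ℝ) : ℂ) = ((D : ℝ) : ℂ) := by
    rw [hDdef, hLdef, ht, hs]
  rw [hB, hBconj, hAeq, hDeq]
  exact psd2 A D ((c : ℂ) * (starRingEnd ℂ) z.1) hA hD hdet
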